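/- Let N be a finite ground set, b, c ∈ [0,1], and for each e ∈ N let each element be independently active with probability at most b (i.e., consider a random set R ⊆ N with independent memberships, Pr[e ∈ R] ≤ b). For a knapsack constraint with n elements of sizes s_1 = ... = s_{n-1} = 1/n, s_n = 1, and input vector x_1 = ... = x_{n-1} = b, x_n = b/n, any deterministic down-closed family F_x ⊆ 2^N whose sets all satisfy the knapsack constraint, and in which every singleton appears, satisfies: Pr[I ∪ {n} ∈ F_x for all I ⊆ R(x), I ∈ F_x] ≤ (1-b)^{n-1}, where R(x) contains each element e independently with probability x_e. Consequently, no deterministic greedy OCRS for this knapsack polytope is (b,c)-selectable for any c > (1-b)^{n-1}. -/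

import Mathlib

/-- The probability that an independent-membership random subset (where element `e`
is included with probability `x e`) equals exactly `A`. -/
noncomputable def setProb {α : Type*} [Fintype α] [DecidableEq α]
    (x : α → ℝ) (A : Finset α) : ℝ :=
  (∏ e ∈ A, x e) * ∏ e ∈ Aᶜ, (1 - x e)

open Classical in
/-- The probability that the random set `R(x)` satisfies the predicate `E`. -/
noncomputable def prSet {α : Type*} [Fintype α] [DecidableEq α]
    (x : α → ℝ) (E : Finset α → Prop) : ℝ :=
  ∑ A : Finset α, if E A then setProb x A else 0

lemma setProb_nonneg {α : Type*} [Fintype α] [DecidableEq α]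
    (x : α → ℝ) (hx0 : ∀ e, 0 ≤ x e) (hx1 : ∀ e, x e ≤ 1) (A : Finset α) :
    0 ≤ setProb x A := by
  unfold setProb
  apply mul_nonneg
  · exact Finset.prod_nonneg fun e _ => hx0 e
  · exact Finset.prod_nonneg fun e _ => by linarith [hx1 e]

set_option maxHeartbeats 1000000 in
/-- for the knapsack instance with `m` small elements of size `1/(m+1)`
and one big element of size `1`, with input `x` equal to `b` on small elements and
`b/(m+1)` on the big element, any deterministic down-closed family `F` of feasible
sets containing all singletons satisfies
`Pr[I ∪ {last} ∈ F for all I ⊆ R(x) with I ∈ F] ≤ (1-b)^m`;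
consequently no deterministic greedy OCRS for this knapsack polytope is
`(b,c)`-selectable for `c > (1-b)^m`. -/
theorem stmt3 (m : ℕ) (hm : 1 ≤ m) (b : ℝ) (hb : b ∈ Set.Icc (0 : ℝ) 1)
    (s : Fin (m+1) → ℝ)
    (hs_small : ∀ i : Fin (m+1), i ≠ Fin.last m → s i = 1 / (m+1))
    (hs_big : s (Fin.last m) = 1)
    (x : Fin (m+1) → ℝ)
    (hx_small : ∀ i : Fin (m+1), i ≠ Fin.last m → x i = b)
    (hx_big : x (Fin.last m) = b / (m+1))
    (F : Finset (Fin (m+1)) → Prop)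
    (hdown : ∀ I J : Finset (Fin (m+1)), J ⊆ I → F I → F J)
    (hfeas : ∀ I, F I → ∑ e ∈ I, s e ≤ 1)
    (hsing : ∀ e, F {e}) :
    prSet x (fun A => ∀ I ⊆ A, F I → F (insert (Fin.last m) I)) ≤ (1 - b) ^ m ∧
    ∀ c : ℝ, c ≤ prSet x (fun A => ∀ I ⊆ A, F I → F (insert (Fin.last m) I)) →
      c ≤ (1 - b) ^ m := by
  classical
  obtain ⟨hb0, hb1⟩ := hb
  have hmpos : (0:ℝ) < (m:ℝ) + 1 := by positivity
  have hx0 : ∀ e, 0 ≤ x e := by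
    intro e
    by_cases he : e = Fin.last m
    · rw [he, hx_big]; positivity
    · rw [hx_small e he]; exact hb0
  have hx1 : ∀ e, x e ≤ 1 := by
    intro e
    by_cases he : e = Fin.last m
    · rw [he, hx_big]
      rw [div_le_one hmpos]
      linarith
    · rw [hx_small e he]; exact hb1
  -- The event forces A ⊆ {last}
  have key : ∀ A : Finset (Fin (m+1)),
      (∀ I ⊆ A, F I → F (insert (Fin.last m) I)) → A ⊆ {Fin.last m} := by
    intro A hA i hi
    simp only [Finset.mem_singleton]
    by_contra hne
    have h1 : F (insert (Fin.last m) {i}) := hA {i} (Finset.singleton_subset_iff.2 hi) (hsing i)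
    have h2 := hfeas _ h1
    rw [Finset.sum_insert (by simp [Ne.symm hne]), Finset.sum_singleton,
      hs_big, hs_small i hne] at h2
    have : (0:ℝ) < 1 / ((m:ℝ)+1) := by positivity
    push_cast at h2
    linarith
  -- bound prSet by sum over subsets of {last}
  set E := fun A : Finset (Fin (m+1)) => ∀ I ⊆ A, F I → F (insert (Fin.last m) I) with hE
  have hbound : prSet x E ≤ setProb x ∅ + setProb x {Fin.last m} := by
    unfold prSet
    refine le_trans (Finset.sum_le_sum
      (g := fun A => if A ⊆ ({Fin.last m} : Finset (Fin (m+1))) then setProb x A else 0)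
      ?_) ?_
    · intro A _
      by_cases hEA : E A
      · rw [if_pos hEA, if_pos (key A hEA)]
      · rw [if_neg hEA]
        split
        · exact setProb_nonneg x hx0 hx1 A
        · exact le_refl 0
    rw [← Finset.sum_filter]
    have hfil : (Finset.univ.filter (fun A : Finset (Fin (m+1)) => A ⊆ {Fin.last m}))
        = ({Fin.last m} : Finset (Fin (m+1))).powerset := by
      ext A; simp
    have hpow : ({Fin.last m} : Finset (Fin (m+1))).powerset
        = {∅, {Fin.last m}} := by
      ext A; simp [Finset.subset_singleton_iff]
    rw [hfil, hpow, Finset.sum_insert (by simp only [Finset.mem_singleton]; exact fun h => Finset.singleton_ne_empty _ h.symm), Finset.sum_singleton]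
  -- compute the RHS
  have hcomp : setProb x ∅ + setProb x {Fin.last m} = (1 - b) ^ m := by
    unfold setProb
    have hcompl : ({Fin.last m} : Finset (Fin (m+1)))ᶜ =
        Finset.univ.erase (Fin.last m) := by
      ext e; simp [Finset.mem_erase, eq_comm]
    have hempty : (∅ : Finset (Fin (m+1)))ᶜ = Finset.univ := by simp
    rw [hempty, hcompl, Finset.prod_empty, Finset.prod_singleton, one_mul]
    rw [← Finset.prod_erase_mul Finset.univ _ (Finset.mem_univ (Fin.last m))]
    have hprod : ∏ e ∈ Finset.univ.erase (Fin.last m), (1 - x e) = (1 - b) ^ m := by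
      rw [Finset.prod_congr rfl (fun e he => by
        rw [hx_small e (Finset.ne_of_mem_erase he)]),
        Finset.prod_const]
      congr 1
      rw [Finset.card_erase_of_mem (Finset.mem_univ _)]
      simp
    rw [hprod]
    ring
  constructor
  · rw [← hcomp]; exact hbound
  · intro c hc
    calc c ≤ prSet x E := hc
      _ ≤ (1 - b) ^ m := by rw [← hcomp]; exact hbound
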